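/- Every connected cubic (3-regular) finite simple graph of order at least eight has an independent minimum vertex cut, i.e., a vertex cut S with |S| = κ(G) that is an independent set of G. -/

import Mathlib

open SimpleGraph

/-- `S` is a vertex cut of `G`: a proper subset of the vertex set whose removal
disconnects the graph. -/
def IsVertexCut {V : Type*} [Fintype V] (G : SimpleGraph V) (S : Finset V) : Prop :=
  (S : Set V) ≠ Set.univ ∧ ¬ (G.induce ((S : Set V)ᶜ)).Connected

/-- The connectivity `κ(G)`: the minimum cardinality of a vertex cut of `G`. -/
noncomputable def graphConnectivity {V : Type*} [Fintype V] (G : SimpleGraph V) : ℕ :=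
  sInf {k | ∃ S : Finset V, IsVertexCut G S ∧ S.card = k}

section aux
variable {V : Type*} [Fintype V] {G : SimpleGraph V}

lemma cut_of_partition {S : Finset V} {A B : Set V} (hA : A.Nonempty) (hB : B.Nonempty)
    (hU : A ∪ B = (↑S : Set V)ᶜ) (hdisj : ∀ x ∈ A, x ∉ B)
    (hE : ∀ a ∈ A, ∀ b ∈ B, ¬ G.Adj a b) : IsVertexCut G S := by
  constructor
  · intro h
    obtain ⟨b, hb⟩ := hB
    have hbS : b ∈ (↑S : Set V)ᶜ := hU ▸ Set.mem_union_right _ hb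
    have : b ∈ (↑S : Set V) := h ▸ Set.mem_univ b
    exact hbS this
  · intro hc
    obtain ⟨a, ha⟩ := hA
    obtain ⟨b, hb⟩ := hB
    have haS : a ∈ (↑S : Set V)ᶜ := hU ▸ Set.mem_union_left _ ha
    have hbS : b ∈ (↑S : Set V)ᶜ := hU ▸ Set.mem_union_right _ hb
    obtain ⟨p⟩ := hc.preconnected ⟨a, haS⟩ ⟨b, hbS⟩
    have key : ∀ (u v : ((↑S : Set V)ᶜ : Set V)) (p : (G.induce ((↑S : Set V)ᶜ)).Walk u v),
        (u : V) ∈ A → (v : V) ∈ A := by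
      intro u v p
      induction p with
      | nil => exact id
      | @cons x y z hadj q ih =>
        intro hu
        apply ih
        have hadj' : G.Adj (x : V) (y : V) := hadj
        have hyS : (y : V) ∈ (↑S : Set V)ᶜ := y.2
        have hyU : (y : V) ∈ A ∪ B := by rw [hU]; exact hyS
        rcases hyU with h' | h'
        · exact h'
        · exact absurd hadj' (hE _ hu _ h')
    exact hdisj b (key _ _ p ha) hb

lemma exists_partition_of_cut {S : Finset V} (h : IsVertexCut G S) :
    ∃ C D : Set V, C.Nonempty ∧ D.Nonempty ∧ C ∪ D = (↑S : Set V)ᶜ ∧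
      (∀ x ∈ C, x ∉ D) ∧
      (∀ z ∈ C, ∀ w ∈ (↑S : Set V)ᶜ, G.Adj z w → w ∈ C) ∧
      (∀ z ∈ D, ∀ w ∈ (↑S : Set V)ᶜ, G.Adj z w → w ∈ D) := by
  obtain ⟨hne, hnc⟩ := h
  have hnonempty : ∃ v : V, v ∈ (↑S : Set V)ᶜ := by
    by_contra hctr
    push_neg at hctr
    apply hne
    ext x; simp only [Set.mem_univ, iff_true]
    by_contra hx
    exact (hctr x) hx
  obtain ⟨v0, hv0⟩ := hnonempty
  have : ¬ (G.induce ((↑S : Set V)ᶜ)).Preconnected := by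
    intro hp
    haveI : Nonempty (((↑S : Set V)ᶜ : Set V)) := ⟨⟨v0, hv0⟩⟩
    exact hnc (Connected.mk hp)
  rw [Preconnected] at this
  push_neg at this
  obtain ⟨u, w, huw⟩ := this
  refine ⟨{z | ∃ hz : z ∈ (↑S : Set V)ᶜ, (G.induce ((↑S : Set V)ᶜ)).Reachable u ⟨z, hz⟩},
    {z | ∃ hz : z ∈ (↑S : Set V)ᶜ, ¬ (G.induce ((↑S : Set V)ᶜ)).Reachable u ⟨z, hz⟩},
    ⟨u, u.2, Reachable.refl _⟩, ⟨w, w.2, by simpa using huw⟩, ?_, ?_, ?_, ?_⟩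
  · ext z
    constructor
    · rintro (⟨hz, _⟩ | ⟨hz, _⟩) <;> exact hz
    · intro hz
      by_cases hr : (G.induce ((↑S : Set V)ᶜ)).Reachable u ⟨z, hz⟩
      · exact Or.inl ⟨hz, hr⟩
      · exact Or.inr ⟨hz, hr⟩
  · rintro x ⟨hx, hr⟩ ⟨hx', hnr⟩
    exact hnr hr
  · rintro z ⟨hz, hr⟩ x hx hadj
    refine ⟨hx, hr.trans (Adj.reachable ?_)⟩
    exact hadj
  · rintro z ⟨hz, hnr⟩ x hx hadj
    refine ⟨hx, fun hr => hnr (hr.trans (Adj.reachable ?_))⟩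
    exact (G.adj_symm hadj : G.Adj x z)

end aux

section aux2
variable {V : Type*} [Fintype V] [DecidableEq V] {G : SimpleGraph V}

/-- Uniform cut construction: remove `T ⊆ C ∪ S`; the part `C \ T` gets separated. -/
lemma cut_of_split {S T : Finset V} {C D : Set V}
    (hU : C ∪ D = (↑S : Set V)ᶜ) (hdisj : ∀ x ∈ C, x ∉ D)
    (hclC : ∀ z ∈ C, ∀ w ∈ (↑S : Set V)ᶜ, G.Adj z w → w ∈ C)
    (hA : (C \ (↑T : Set V)).Nonempty)
    (hB : ∃ w, w ∈ (↑S : Set V) ∧ w ∉ (↑T : Set V))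
    (hedge : ∀ z ∈ C, z ∉ (↑T : Set V) → ∀ w ∈ (↑S : Set V), w ∉ (↑T : Set V) → ¬ G.Adj z w) :
    IsVertexCut G T := by
  have hCS : ∀ x ∈ C, x ∉ (↑S : Set V) := by
    intro x hx
    have : x ∈ (↑S : Set V)ᶜ := hU ▸ Set.mem_union_left _ hx
    exact this
  have hDS : ∀ x ∈ D, x ∉ (↑S : Set V) := by
    intro x hx
    have : x ∈ (↑S : Set V)ᶜ := hU ▸ Set.mem_union_right _ hx
    exact this
  apply cut_of_partition (A := C \ (↑T : Set V)) (B := (((↑S : Set V)) ∪ D) \ (↑T : Set V))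
  · exact hA
  · obtain ⟨w, hwS, hwT⟩ := hB
    exact ⟨w, Set.mem_union_left _ hwS, hwT⟩
  · ext x
    simp only [Set.mem_union, Set.mem_diff, Set.mem_compl_iff]
    constructor
    · rintro (⟨-, h⟩ | ⟨-, h⟩) <;> exact h
    · intro hx
      by_cases hxC : x ∈ C
      · exact Or.inl ⟨hxC, hx⟩
      · refine Or.inr ⟨?_, hx⟩
        by_cases hxS : x ∈ (↑S : Set V)
        · exact Or.inl hxS
        · refine Or.inr ?_
          have : x ∈ C ∪ D := hU ▸ (hxS : x ∈ (↑S : Set V)ᶜ)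
          rcases this with h | h
          · exact absurd h hxC
          · exact h
  · rintro x ⟨hxC, -⟩ ⟨h | h, -⟩
    · exact hCS x hxC h
    · exact hdisj x hxC h
  · rintro z ⟨hzC, hzT⟩ w ⟨hw | hw, hwT⟩ hadj
    · exact hedge z hzC hzT w hw hwT hadj
    · have hwS : w ∈ (↑S : Set V)ᶜ := fun hin => hDS w hw hin
      exact hdisj w (hclC z hzC w hwS hadj) hw

/-- Every vertex of a minimum cut has a neighbor in each side. -/
lemma nbr_in_side {S : Finset V} {C D : Set V}
    (hmin : ∀ T : Finset V, IsVertexCut G T → S.card ≤ T.card)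
    (hU : C ∪ D = (↑S : Set V)ᶜ) (hC : C.Nonempty) (hdisj : ∀ x ∈ C, x ∉ D)
    (hclC : ∀ z ∈ C, ∀ w ∈ (↑S : Set V)ᶜ, G.Adj z w → w ∈ C)
    {a : V} (ha : a ∈ S) : ∃ z ∈ C, G.Adj a z := by
  by_contra h
  push_neg at h
  have hcut : IsVertexCut G (S.erase a) := by
    apply cut_of_split hU hdisj hclC
    · obtain ⟨z, hz⟩ := hC
      refine ⟨z, hz, fun hzT => ?_⟩
      have hzS : z ∈ (↑S : Set V)ᶜ := hU ▸ Set.mem_union_left _ hz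
      exact hzS (Finset.coe_subset.mpr (Finset.erase_subset a S) hzT)
    · exact ⟨a, ha, by simp⟩
    · intro z hzC hzT w hwS hwT hadj
      have hwa : w = a := by
        by_contra hne
        exact hwT (by simpa [Finset.mem_erase, hne] using hwS)
      subst hwa
      exact h z hzC (hadj.symm)
  have := hmin _ hcut
  have hcard : (S.erase a).card = S.card - 1 := Finset.card_erase_of_mem ha
  have hpos : 0 < S.card := Finset.card_pos.mpr ⟨a, ha⟩
  omega

/-- In a cubic graph, three known distinct neighbors are all the neighbors. -/
lemma nbrs_eq (hcubic : ∀ v : V, (G.neighborSet v).ncard = 3)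
    {a b a1 a2 : V} (h1 : G.Adj a b) (h2 : G.Adj a a1) (h3 : G.Adj a a2)
    (hb1 : b ≠ a1) (hb2 : b ≠ a2) (h12 : a1 ≠ a2) :
    ∀ z, G.Adj a z → z = b ∨ z = a1 ∨ z = a2 := by
  have hsub : ({b, a1, a2} : Set V) ⊆ G.neighborSet a := by
    rintro z (rfl | rfl | rfl) <;> assumption
  have hcard : ({b, a1, a2} : Set V).ncard = 3 := by
    rw [Set.ncard_insert_of_notMem (by simp [hb1, hb2]) (Set.toFinite _),
      Set.ncard_pair h12]
  have heq : ({b, a1, a2} : Set V) = G.neighborSet a :=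
    Set.eq_of_subset_of_ncard_le hsub (by rw [hcubic a, hcard]) (Set.toFinite _)
  intro z hz
  have : z ∈ ({b, a1, a2} : Set V) := heq ▸ (hz : z ∈ G.neighborSet a)
  simpa using this

lemma indep2 {a b : V} (h1 : ¬ G.Adj a b) :
    ∀ x ∈ ({a, b} : Finset V), ∀ y ∈ ({a, b} : Finset V), ¬ G.Adj x y := by
  intro x hx y hy
  simp only [Finset.mem_insert, Finset.mem_singleton] at hx hy
  rcases hx with rfl | rfl <;> rcases hy with rfl | rfl <;>
    first
      | exact G.loopless.irrefl _
      | assumption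
      | exact fun h => h1 h.symm

lemma indep3 {a b c : V} (h1 : ¬ G.Adj a b) (h2 : ¬ G.Adj a c) (h3 : ¬ G.Adj b c) :
    ∀ x ∈ ({a, b, c} : Finset V), ∀ y ∈ ({a, b, c} : Finset V), ¬ G.Adj x y := by
  intro x hx y hy
  simp only [Finset.mem_insert, Finset.mem_singleton] at hx hy
  rcases hx with rfl | rfl | rfl <;> rcases hy with rfl | rfl | rfl <;>
    first
      | exact G.loopless.irrefl _
      | assumption
      | exact fun h => h1 h.symm
      | exact fun h => h2 h.symm
      | exact fun h => h3 h.symm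

end aux2

section core
variable {V : Type*} [Fintype V] [DecidableEq V] {G : SimpleGraph V}

lemma core2 (hcubic : ∀ v : V, (G.neighborSet v).ncard = 3)
    {a b : V} (hab : a ≠ b) (hAdj : G.Adj a b)
    (hmin : ∀ T : Finset V, IsVertexCut G T → 2 ≤ T.card)
    {C D : Set V} (hU : C ∪ D = (↑({a, b} : Finset V) : Set V)ᶜ)
    (hC : C.Nonempty) (hD : D.Nonempty) (hdisj : ∀ x ∈ C, x ∉ D)
    (hclC : ∀ z ∈ C, ∀ w ∈ (↑({a, b} : Finset V) : Set V)ᶜ, G.Adj z w → w ∈ C)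
    (hclD : ∀ z ∈ D, ∀ w ∈ (↑({a, b} : Finset V) : Set V)ᶜ, G.Adj z w → w ∈ D)
    (hC2 : 2 ≤ C.ncard) :
    ∃ S : Finset V, IsVertexCut G S ∧ S.card = 2 ∧ ∀ x ∈ S, ∀ y ∈ S, ¬ G.Adj x y := by
  have hcard2 : ({a, b} : Finset V).card = 2 := by
    rw [Finset.card_insert_of_notMem (by simpa using hab), Finset.card_singleton]
  have hmin' : ∀ T : Finset V, IsVertexCut G T → ({a, b} : Finset V).card ≤ T.card := by
    rw [hcard2]; exact hmin
  have hCne : ∀ x ∈ C, x ≠ a ∧ x ≠ b := by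
    intro x hx
    have hx' : x ∈ (↑({a, b} : Finset V) : Set V)ᶜ := hU ▸ Set.mem_union_left _ hx
    simpa [not_or] using hx'
  have hDne : ∀ x ∈ D, x ≠ a ∧ x ≠ b := by
    intro x hx
    have hx' : x ∈ (↑({a, b} : Finset V) : Set V)ᶜ := hU ▸ Set.mem_union_right _ hx
    simpa [not_or] using hx'
  have hdisjD : ∀ x ∈ D, x ∉ C := fun x hx hxC => hdisj x hxC hx
  have hUD : D ∪ C = (↑({a, b} : Finset V) : Set V)ᶜ := by rw [Set.union_comm]; exact hU
  obtain ⟨a1, ha1, hAa1⟩ := nbr_in_side hmin' hU hC hdisj hclC (a := a) (by simp)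
  obtain ⟨a2, ha2, hAa2⟩ := nbr_in_side hmin' hUD hD hdisjD hclD (a := a) (by simp)
  obtain ⟨b1, hb1, hAb1⟩ := nbr_in_side hmin' hU hC hdisj hclC (a := b) (by simp)
  obtain ⟨b2, hb2, hAb2⟩ := nbr_in_side hmin' hUD hD hdisjD hclD (a := b) (by simp)
  have ha1ab := hCne a1 ha1
  have ha2ab := hDne a2 ha2
  have hb1ab := hCne b1 hb1
  have hb2ab := hDne b2 hb2
  have ha12 : a1 ≠ a2 := fun h => hdisj a1 ha1 (h ▸ ha2)
  have hb12 : b1 ≠ b2 := fun h => hdisj b1 hb1 (h ▸ hb2)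
  have hNa := nbrs_eq hcubic hAdj hAa1 hAa2 (Ne.symm ha1ab.2) (Ne.symm ha2ab.2) ha12
  have hNb := nbrs_eq hcubic hAdj.symm hAb1 hAb2 (Ne.symm hb1ab.1) (Ne.symm hb2ab.1) hb12
  -- a1 ≠ b1
  have ha1b1 : a1 ≠ b1 := by
    intro heq
    have hcut : IsVertexCut G {a1} := by
      apply cut_of_split hU hdisj hclC
      · obtain ⟨z, hz, hza1⟩ := Set.exists_ne_of_one_lt_ncard hC2 a1
        exact ⟨z, hz, by simpa using hza1⟩
      · exact ⟨a, by simp, by simpa using (Ne.symm ha1ab.1)⟩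
      · intro z hzC hzT w hwS hwT hadj
        have hzT' : z ≠ a1 := by simpa using hzT
        rcases (by simpa using hwS : w = a ∨ w = b) with rfl | rfl
        · rcases hNa z hadj.symm with rfl | rfl | rfl
          · exact (hCne z hzC).2 rfl
          · exact hzT' rfl
          · exact hdisj z hzC ha2
        · rcases hNb z hadj.symm with rfl | rfl | rfl
          · exact (hCne z hzC).1 rfl
          · exact hzT' heq.symm
          · exact hdisj z hzC hb2
    have := hmin _ hcut
    simp at this
  -- the independent cut {a1, b}
  refine ⟨{a1, b}, ?_, ?_, ?_⟩
  · apply cut_of_split hU hdisj hclC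
    · obtain ⟨z, hz, hza1⟩ := Set.exists_ne_of_one_lt_ncard hC2 a1
      exact ⟨z, hz, by simp [hza1, (hCne z hz).2]⟩
    · exact ⟨a, by simp, by simp [hab, Ne.symm ha1ab.1]⟩
    · intro z hzC hzT w hwS hwT hadj
      have hz' : z ≠ a1 ∧ z ≠ b := by simpa [not_or] using hzT
      rcases (by simpa using hwS : w = a ∨ w = b) with rfl | rfl
      · rcases hNa z hadj.symm with rfl | rfl | rfl
        · exact (hCne z hzC).2 rfl
        · exact hz'.1 rfl
        · exact hdisj z hzC ha2
      · exact hwT (by simp)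
  · rw [Finset.card_insert_of_notMem (by simpa using ha1ab.2), Finset.card_singleton]
  · apply indep2
    intro h
    rcases hNb a1 h.symm with rfl | rfl | rfl
    · exact ha1ab.1 rfl
    · exact ha1b1 rfl
    · exact hdisj a1 ha1 hb2
end core

section core3
variable {V : Type*} [Fintype V] [DecidableEq V] {G : SimpleGraph V}

lemma core3 (hcubic : ∀ v : V, (G.neighborSet v).ncard = 3)
    (h8 : 8 ≤ Fintype.card V)
    {a b c : V} (hab : a ≠ b) (hac : a ≠ c) (hbc : b ≠ c) (hAdj : G.Adj a b)
    (hmin : ∀ T : Finset V, IsVertexCut G T → 3 ≤ T.card)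
    {C D : Set V} (hU : C ∪ D = (↑({a, b, c} : Finset V) : Set V)ᶜ)
    (hC : C.Nonempty) (hD : D.Nonempty) (hdisj : ∀ x ∈ C, x ∉ D)
    (hclC : ∀ z ∈ C, ∀ w ∈ (↑({a, b, c} : Finset V) : Set V)ᶜ, G.Adj z w → w ∈ C)
    (hclD : ∀ z ∈ D, ∀ w ∈ (↑({a, b, c} : Finset V) : Set V)ᶜ, G.Adj z w → w ∈ D)
    (hC2 : 2 ≤ C.ncard) :
    ∃ S : Finset V, IsVertexCut G S ∧ S.card = 3 ∧ ∀ x ∈ S, ∀ y ∈ S, ¬ G.Adj x y := by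
  have hcard3 : ({a, b, c} : Finset V).card = 3 := by
    rw [Finset.card_insert_of_notMem (by simp [hab, hac]),
      Finset.card_insert_of_notMem (by simpa using hbc), Finset.card_singleton]
  have hmin' : ∀ T : Finset V, IsVertexCut G T → ({a, b, c} : Finset V).card ≤ T.card := by
    rw [hcard3]; exact hmin
  have hCne : ∀ x ∈ C, x ≠ a ∧ x ≠ b ∧ x ≠ c := by
    intro x hx
    have hx' : x ∈ (↑({a, b, c} : Finset V) : Set V)ᶜ := hU ▸ Set.mem_union_left _ hx
    simpa [not_or] using hx'
  have hDne : ∀ x ∈ D, x ≠ a ∧ x ≠ b ∧ x ≠ c := by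
    intro x hx
    have hx' : x ∈ (↑({a, b, c} : Finset V) : Set V)ᶜ := hU ▸ Set.mem_union_right _ hx
    simpa [not_or] using hx'
  have hdisjD : ∀ x ∈ D, x ∉ C := fun x hx hxC => hdisj x hxC hx
  have hUD : D ∪ C = (↑({a, b, c} : Finset V) : Set V)ᶜ := by rw [Set.union_comm]; exact hU
  obtain ⟨a1, ha1, hAa1⟩ := nbr_in_side hmin' hU hC hdisj hclC (a := a) (by simp)
  obtain ⟨a2, ha2, hAa2⟩ := nbr_in_side hmin' hUD hD hdisjD hclD (a := a) (by simp)
  obtain ⟨b1, hb1, hAb1⟩ := nbr_in_side hmin' hU hC hdisj hclC (a := b) (by simp)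
  obtain ⟨b2, hb2, hAb2⟩ := nbr_in_side hmin' hUD hD hdisjD hclD (a := b) (by simp)
  obtain ⟨c2, hc2, hAc2⟩ := nbr_in_side hmin' hUD hD hdisjD hclD (a := c) (by simp)
  have ha1s := hCne a1 ha1
  have ha2s := hDne a2 ha2
  have hb1s := hCne b1 hb1
  have hb2s := hDne b2 hb2
  have hc2s := hDne c2 hc2
  have ha12 : a1 ≠ a2 := fun h => hdisj a1 ha1 (h ▸ ha2)
  have hb12 : b1 ≠ b2 := fun h => hdisj b1 hb1 (h ▸ hb2)
  have hNa := nbrs_eq hcubic hAdj hAa1 hAa2 (Ne.symm ha1s.2.1) (Ne.symm ha2s.2.1) ha12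
  have hNb := nbrs_eq hcubic hAdj.symm hAb1 hAb2 (Ne.symm hb1s.1) (Ne.symm hb2s.1) hb12
  have hnac : ¬ G.Adj a c := by
    intro h
    rcases hNa c h with rfl | rfl | rfl
    · exact hbc rfl
    · exact ha1s.2.2 rfl
    · exact ha2s.2.2 rfl
  have hnbc : ¬ G.Adj b c := by
    intro h
    rcases hNb c h with rfl | rfl | rfl
    · exact hac rfl
    · exact hb1s.2.2 rfl
    · exact hb2s.2.2 rfl
  -- a1 ≠ b1
  have ha1b1 : a1 ≠ b1 := by
    intro heq
    have hcut : IsVertexCut G {a1, c} := by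
      apply cut_of_split hU hdisj hclC
      · obtain ⟨z, hz, hza1⟩ := Set.exists_ne_of_one_lt_ncard hC2 a1
        exact ⟨z, hz, by simp [hza1, (hCne z hz).2.2]⟩
      · exact ⟨a, by simp, by simp [hac, Ne.symm ha1s.1]⟩
      · intro z hzC hzT w hwS hwT hadj
        have hz' : z ≠ a1 ∧ z ≠ c := by simpa [not_or] using hzT
        rcases (by simpa using hwS : w = a ∨ w = b ∨ w = c) with rfl | rfl | rfl
        · rcases hNa z hadj.symm with rfl | rfl | rfl
          · exact (hCne z hzC).2.1 rfl
          · exact hz'.1 rfl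
          · exact hdisj z hzC ha2
        · rcases hNb z hadj.symm with rfl | rfl | rfl
          · exact (hCne z hzC).1 rfl
          · exact hz'.1 heq.symm
          · exact hdisj z hzC hb2
        · exact hwT (by simp)
    have := hmin _ hcut
    have : ({a1, c} : Finset V).card = 2 := by
      rw [Finset.card_insert_of_notMem (by simpa using ha1s.2.2), Finset.card_singleton]
    omega
  by_cases hca1 : G.Adj c a1
  · by_cases hcb1 : G.Adj c b1
    · -- c adjacent to both a1 and b1; its third neighbor is c2 ∈ D
      have hNc := nbrs_eq hcubic hca1 hcb1 hAc2 ha1b1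
        (fun h => hdisj a1 ha1 (h ▸ hc2)) (fun h => hdisj b1 hb1 (h ▸ hc2))
      rcases lt_or_ge D.ncard 2 with hD1 | hD2
      · -- |D| = 1 : contradiction via the 2-cut {a1, b1}
        exfalso
        have hDsingle : ∀ x ∈ D, x = a2 := by
          intro x hx
          by_contra hne
          have hsub : ({x, a2} : Set V) ⊆ D := by
            rintro y (rfl | rfl)
            exacts [hx, ha2]
          have := Set.ncard_le_ncard hsub (Set.toFinite _)
          rw [Set.ncard_pair hne] at this
          omega
        have hc2a2 : c2 = a2 := hDsingle c2 hc2
        have hC3 : 3 ≤ C.ncard := by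
          have hdisj' : Disjoint C D := Set.disjoint_left.mpr (fun {x} hx => hdisj x hx)
          have hsum : C.ncard + D.ncard = ((↑({a, b, c} : Finset V) : Set V)ᶜ).ncard := by
            rw [← hU, Set.ncard_union_eq hdisj' (Set.toFinite _) (Set.toFinite _)]
          have hcompl := Set.ncard_add_ncard_compl (↑({a, b, c} : Finset V) : Set V)
            (Set.toFinite _) (Set.toFinite _)
          rw [Set.ncard_coe_finset, hcard3, Nat.card_eq_fintype_card] at hcompl
          have hD1' : 1 ≤ D.ncard := by
            obtain ⟨d, hd⟩ := hD
            have : ({d} : Set V) ⊆ D := by rintro y rfl; exact hd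
            have := Set.ncard_le_ncard this (Set.toFinite _)
            simpa using this
          omega
        obtain ⟨z0, hz0, hz0ne⟩ : ∃ z ∈ C, z ≠ a1 ∧ z ≠ b1 := by
          by_contra hno
          push_neg at hno
          have hsub : C ⊆ ({a1, b1} : Set V) := by
            intro x hx
            rcases Classical.em (x = a1) with rfl | hx1
            · exact Or.inl rfl
            · exact Or.inr (hno x hx hx1)
          have := Set.ncard_le_ncard hsub (Set.toFinite _)
          have h2 : ({a1, b1} : Set V).ncard = 2 := Set.ncard_pair ha1b1
          omega
        have hcut : IsVertexCut G {a1, b1} := by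
          apply cut_of_split hU hdisj hclC
          · exact ⟨z0, hz0, by simp [hz0ne.1, hz0ne.2]⟩
          · exact ⟨a, by simp, by simp [Ne.symm ha1s.1, Ne.symm hb1s.1]⟩
          · intro z hzC hzT w hwS hwT hadj
            have hz' : z ≠ a1 ∧ z ≠ b1 := by simpa [not_or] using hzT
            rcases (by simpa using hwS : w = a ∨ w = b ∨ w = c) with rfl | rfl | rfl
            · rcases hNa z hadj.symm with rfl | rfl | rfl
              · exact (hCne z hzC).2.1 rfl
              · exact hz'.1 rfl
              · exact hdisj z hzC ha2
            · rcases hNb z hadj.symm with rfl | rfl | rfl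
              · exact (hCne z hzC).1 rfl
              · exact hz'.2 rfl
              · exact hdisj z hzC hb2
            · rcases hNc z hadj.symm with rfl | rfl | rfl
              · exact hz'.1 rfl
              · exact hz'.2 rfl
              · exact hdisj z hzC (hc2a2 ▸ ha2)
        have := hmin _ hcut
        have : ({a1, b1} : Finset V).card = 2 := by
          rw [Finset.card_insert_of_notMem (by simpa using ha1b1), Finset.card_singleton]
        omega
      · -- |D| ≥ 2
        have ha2b2 : a2 ≠ b2 := by
          intro heq
          have hcut : IsVertexCut G {a2, c} := by
            apply cut_of_split hUD hdisjD hclD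
            · obtain ⟨z, hz, hza2⟩ := Set.exists_ne_of_one_lt_ncard hD2 a2
              exact ⟨z, hz, by simp [hza2, (hDne z hz).2.2]⟩
            · exact ⟨a, by simp, by simp [hac, Ne.symm ha2s.1]⟩
            · intro z hzD hzT w hwS hwT hadj
              have hz' : z ≠ a2 ∧ z ≠ c := by simpa [not_or] using hzT
              rcases (by simpa using hwS : w = a ∨ w = b ∨ w = c) with rfl | rfl | rfl
              · rcases hNa z hadj.symm with rfl | rfl | rfl
                · exact (hDne z hzD).2.1 rfl
                · exact hdisjD z hzD ha1
                · exact hz'.1 rfl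
              · rcases hNb z hadj.symm with rfl | rfl | rfl
                · exact (hDne z hzD).1 rfl
                · exact hdisjD z hzD hb1
                · exact hz'.1 heq.symm
              · exact hwT (by simp)
          have := hmin _ hcut
          have : ({a2, c} : Finset V).card = 2 := by
            rw [Finset.card_insert_of_notMem (by simpa using ha2s.2.2), Finset.card_singleton]
          omega
        by_cases ha2c2 : a2 = c2
        · -- use S' = {a, b2, c}
          have hb2c2 : b2 ≠ c2 := fun h => ha2b2 (ha2c2.trans h.symm)
          refine ⟨{a, b2, c}, ?_, ?_, ?_⟩
          · apply cut_of_split hUD hdisjD hclD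
            · obtain ⟨z, hz, hzb2⟩ := Set.exists_ne_of_one_lt_ncard hD2 b2
              exact ⟨z, hz, by simp [hzb2, (hDne z hz).1, (hDne z hz).2.2]⟩
            · exact ⟨b, by simp, by simp [Ne.symm hab, hbc, Ne.symm hb2s.2.1]⟩
            · intro z hzD hzT w hwS hwT hadj
              have hz' : ¬(z = a ∨ z = b2 ∨ z = c) := by simpa using hzT
              push_neg at hz'
              rcases (by simpa using hwS : w = a ∨ w = b ∨ w = c) with rfl | rfl | rfl
              · exact hwT (by simp)
              · rcases hNb z hadj.symm with rfl | rfl | rfl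
                · exact (hDne z hzD).1 rfl
                · exact hdisjD z hzD hb1
                · exact hz'.2.1 rfl
              · exact hwT (by simp)
          · rw [Finset.card_insert_of_notMem (by simp [Ne.symm hb2s.1, hac]),
              Finset.card_insert_of_notMem (by simpa using hb2s.2.2), Finset.card_singleton]
          · apply indep3
            · intro h
              rcases hNa b2 h with h1 | h1 | h1
              · exact hb2s.2.1 h1
              · exact hdisjD b2 hb2 (h1 ▸ ha1)
              · exact ha2b2 h1.symm
            · exact hnac
            · intro h
              rcases hNc b2 h.symm with rfl | rfl | rfl
              · exact hdisjD b2 hb2 ha1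
              · exact hdisjD b2 hb2 hb1
              · exact hb2c2 rfl
        · -- use S' = {a2, b, c}
          refine ⟨{a2, b, c}, ?_, ?_, ?_⟩
          · apply cut_of_split hUD hdisjD hclD
            · obtain ⟨z, hz, hza2⟩ := Set.exists_ne_of_one_lt_ncard hD2 a2
              exact ⟨z, hz, by simp [hza2, (hDne z hz).2.1, (hDne z hz).2.2]⟩
            · exact ⟨a, by simp, by simp [hab, hac, Ne.symm ha2s.1]⟩
            · intro z hzD hzT w hwS hwT hadj
              have hz' : ¬(z = a2 ∨ z = b ∨ z = c) := by simpa using hzT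
              push_neg at hz'
              rcases (by simpa using hwS : w = a ∨ w = b ∨ w = c) with rfl | rfl | rfl
              · rcases hNa z hadj.symm with rfl | rfl | rfl
                · exact (hDne z hzD).2.1 rfl
                · exact hdisjD z hzD ha1
                · exact hz'.1 rfl
              · exact hwT (by simp)
              · exact hwT (by simp)
          · rw [Finset.card_insert_of_notMem (by simp [ha2s.2.1, ha2s.2.2]),
              Finset.card_insert_of_notMem (by simpa using hbc), Finset.card_singleton]
          · apply indep3
            · intro h
              rcases hNb a2 h.symm with rfl | rfl | rfl
              · exact ha2s.1 rfl
              · exact hdisjD a2 ha2 hb1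
              · exact ha2b2 rfl
            · intro h
              rcases hNc a2 h.symm with rfl | rfl | rfl
              · exact hdisjD a2 ha2 ha1
              · exact hdisjD a2 ha2 hb1
              · exact ha2c2 rfl
            · exact hnbc
    · -- ¬ Adj c b1 : use S' = {a, b1, c}
      refine ⟨{a, b1, c}, ?_, ?_, ?_⟩
      · apply cut_of_split hU hdisj hclC
        · obtain ⟨z, hz, hzb1⟩ := Set.exists_ne_of_one_lt_ncard hC2 b1
          exact ⟨z, hz, by simp [hzb1, (hCne z hz).1, (hCne z hz).2.2]⟩
        · exact ⟨b, by simp, by simp [Ne.symm hab, hbc, Ne.symm hb1s.2.1]⟩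
        · intro z hzC hzT w hwS hwT hadj
          have hz' : ¬(z = a ∨ z = b1 ∨ z = c) := by simpa using hzT
          push_neg at hz'
          rcases (by simpa using hwS : w = a ∨ w = b ∨ w = c) with rfl | rfl | rfl
          · exact hwT (by simp)
          · rcases hNb z hadj.symm with rfl | rfl | rfl
            · exact (hCne z hzC).1 rfl
            · exact hz'.2.1 rfl
            · exact hdisj z hzC hb2
          · exact hwT (by simp)
      · rw [Finset.card_insert_of_notMem (by simp [Ne.symm hb1s.1, hac]),
          Finset.card_insert_of_notMem (by simpa using hb1s.2.2), Finset.card_singleton]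
      · apply indep3
        · intro h
          rcases hNa b1 h with rfl | rfl | rfl
          · exact hb1s.2.1 rfl
          · exact ha1b1 rfl
          · exact hdisj b1 hb1 ha2
        · exact hnac
        · exact fun h => hcb1 h.symm
  · -- ¬ Adj c a1 : use S' = {a1, b, c}
    refine ⟨{a1, b, c}, ?_, ?_, ?_⟩
    · apply cut_of_split hU hdisj hclC
      · obtain ⟨z, hz, hza1⟩ := Set.exists_ne_of_one_lt_ncard hC2 a1
        exact ⟨z, hz, by simp [hza1, (hCne z hz).2.1, (hCne z hz).2.2]⟩
      · exact ⟨a, by simp, by simp [hab, hac, Ne.symm ha1s.1]⟩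
      · intro z hzC hzT w hwS hwT hadj
        have hz' : ¬(z = a1 ∨ z = b ∨ z = c) := by simpa using hzT
        push_neg at hz'
        rcases (by simpa using hwS : w = a ∨ w = b ∨ w = c) with rfl | rfl | rfl
        · rcases hNa z hadj.symm with rfl | rfl | rfl
          · exact (hCne z hzC).2.1 rfl
          · exact hz'.1 rfl
          · exact hdisj z hzC ha2
        · exact hwT (by simp)
        · exact hwT (by simp)
    · rw [Finset.card_insert_of_notMem (by simp [ha1s.2.1, ha1s.2.2]),
        Finset.card_insert_of_notMem (by simpa using hbc), Finset.card_singleton]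
    · apply indep3
      · intro h
        rcases hNb a1 h.symm with rfl | rfl | rfl
        · exact ha1s.1 rfl
        · exact ha1b1 rfl
        · exact hdisj a1 ha1 hb2
      · exact fun h => hca1 h.symm
      · exact hnbc
end core3

section final
variable {V : Type*} [Fintype V] [DecidableEq V] {G : SimpleGraph V}

lemma exists_cut3 [DecidableRel G.Adj] (hcubic : ∀ v : V, (G.neighborSet v).ncard = 3)
    (h8 : 8 ≤ Fintype.card V) :
    ∃ S : Finset V, IsVertexCut G S ∧ S.card = 3 := by
  obtain ⟨v⟩ : Nonempty V := Fintype.card_pos_iff.mp (by omega)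
  refine ⟨G.neighborFinset v, ?_, ?_⟩
  · have hcard : (G.neighborFinset v).card = 3 := by
      rw [neighborFinset_def, ← Set.ncard_eq_toFinset_card']
      exact hcubic v
    have hvS : v ∉ (↑(G.neighborFinset v) : Set V) := by
      simp
    have hcompl := Set.ncard_add_ncard_compl (↑(G.neighborFinset v) : Set V)
      (Set.toFinite _) (Set.toFinite _)
    rw [Set.ncard_coe_finset, hcard, Nat.card_eq_fintype_card] at hcompl
    have hlt : 1 < ((↑(G.neighborFinset v) : Set V)ᶜ).ncard := by omega
    obtain ⟨w, hw, hwv⟩ := Set.exists_ne_of_one_lt_ncard hlt v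
    apply cut_of_partition (A := {v}) (B := (↑(G.neighborFinset v) : Set V)ᶜ \ {v})
    · exact ⟨v, rfl⟩
    · exact ⟨w, hw, hwv⟩
    · rw [Set.union_diff_cancel]
      rintro x rfl
      exact hvS
    · rintro x rfl ⟨-, hx⟩
      exact hx rfl
    · rintro x rfl y ⟨hy, -⟩ hadj
      exact hy (by simpa using hadj)
  · rw [neighborFinset_def, ← Set.ncard_eq_toFinset_card']
    exact hcubic v

lemma ncard_sum {S : Finset V} {C D : Set V} (hU : C ∪ D = (↑S : Set V)ᶜ)
    (hdisj : ∀ x ∈ C, x ∉ D) :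
    C.ncard + D.ncard + S.card = Fintype.card V := by
  have hdisj' : Disjoint C D := Set.disjoint_left.mpr (fun {x} hx => hdisj x hx)
  have h1 : C.ncard + D.ncard = ((↑S : Set V)ᶜ).ncard := by
    rw [← hU, Set.ncard_union_eq hdisj' (Set.toFinite _) (Set.toFinite _)]
  have h2 := Set.ncard_add_ncard_compl (↑S : Set V) (Set.toFinite _) (Set.toFinite _)
  rw [Set.ncard_coe_finset, Nat.card_eq_fintype_card] at h2
  omega

end final


/-- Every connected cubic graph of order at least eight has an independent
minimum vertex cut. -/
theorem cubic_independent_minimum_vertex_cut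
    {V : Type*} [Fintype V] (G : SimpleGraph V)
    (hconn : G.Connected)
    (hcubic : ∀ v : V, (G.neighborSet v).ncard = 3)
    (h8 : 8 ≤ Fintype.card V) :
    ∃ S : Finset V, IsVertexCut G S ∧ S.card = graphConnectivity G ∧
      ∀ a ∈ S, ∀ b ∈ S, ¬ G.Adj a b := by
  classical
  obtain ⟨S3, hS3cut, hS3card⟩ := exists_cut3 (G := G) hcubic h8
  have hne : {k | ∃ S : Finset V, IsVertexCut G S ∧ S.card = k}.Nonempty :=
    ⟨3, S3, hS3cut, hS3card⟩
  obtain ⟨S₀, hS₀cut, hS₀card⟩ := Nat.sInf_mem hne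
  replace hS₀card : S₀.card = graphConnectivity G := hS₀card
  have hmin : ∀ T : Finset V, IsVertexCut G T → graphConnectivity G ≤ T.card :=
    fun T hT => Nat.sInf_le ⟨T, hT, rfl⟩
  have hK3 : graphConnectivity G ≤ 3 := Nat.sInf_le ⟨S3, hS3cut, hS3card⟩
  have hK0 : graphConnectivity G ≠ 0 := by
    intro h0
    have hcard0 : S₀.card = 0 := by rw [hS₀card, h0]
    have hS₀empty : S₀ = ∅ := Finset.card_eq_zero.mp hcard0
    subst hS₀empty
    have hceq : ((↑(∅ : Finset V) : Set V))ᶜ = Set.univ := by simp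
    obtain ⟨-, hnc⟩ := hS₀cut
    rw [hceq] at hnc
    exact hnc ((induceUnivIso G).connected_iff.mpr hconn)
  have hKcases : graphConnectivity G = 1 ∨ graphConnectivity G = 2 ∨
      graphConnectivity G = 3 := by omega
  rcases hKcases with hK | hK | hK
  · -- K = 1
    refine ⟨S₀, hS₀cut, hS₀card, ?_⟩
    rw [hK] at hS₀card
    obtain ⟨v, rfl⟩ := Finset.card_eq_one.mp hS₀card
    intro x hx y hy
    rw [Finset.mem_singleton] at hx hy
    subst hx; subst hy
    exact G.loopless.irrefl _
  · -- K = 2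
    rw [hK] at hS₀card
    obtain ⟨a, b, hab, rfl⟩ := Finset.card_eq_two.mp hS₀card
    have hmin2 : ∀ T : Finset V, IsVertexCut G T → 2 ≤ T.card := by
      intro T hT; have := hmin T hT; omega
    by_cases hadj : G.Adj a b
    · obtain ⟨C, D, hC, hD, hU, hdisj, hclC, hclD⟩ := exists_partition_of_cut hS₀cut
      have hdisjD : ∀ x ∈ D, x ∉ C := fun x hx hxC => hdisj x hxC hx
      have hUD : D ∪ C = (↑({a, b} : Finset V) : Set V)ᶜ := by
        rw [Set.union_comm]; exact hU
      have hsum := ncard_sum hU hdisj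
      rw [hS₀card] at hsum
      have hbig : 2 ≤ C.ncard ∨ 2 ≤ D.ncard := by omega
      rcases hbig with h2 | h2
      · obtain ⟨S', hcut', hcard', hindep'⟩ :=
          core2 hcubic hab hadj hmin2 hU hC hD hdisj hclC hclD h2
        exact ⟨S', hcut', by rw [hcard', hK], hindep'⟩
      · obtain ⟨S', hcut', hcard', hindep'⟩ :=
          core2 hcubic hab hadj hmin2 hUD hD hC hdisjD hclD hclC h2
        exact ⟨S', hcut', by rw [hcard', hK], hindep'⟩
    · exact ⟨{a, b}, hS₀cut, by rw [hS₀card, hK], indep2 hadj⟩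
  · -- K = 3
    rw [hK] at hS₀card
    obtain ⟨a, b, c, hab, hac, hbc, rfl⟩ := Finset.card_eq_three.mp hS₀card
    have hmin3 : ∀ T : Finset V, IsVertexCut G T → 3 ≤ T.card := by
      intro T hT; have := hmin T hT; omega
    obtain ⟨C, D, hC, hD, hU, hdisj, hclC, hclD⟩ := exists_partition_of_cut hS₀cut
    have hdisjD : ∀ x ∈ D, x ∉ C := fun x hx hxC => hdisj x hxC hx
    have hsum := ncard_sum hU hdisj
    rw [hS₀card] at hsum
    have hbig : 2 ≤ C.ncard ∨ 2 ≤ D.ncard := by omega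
    by_cases h1 : G.Adj a b
    · rcases hbig with h2 | h2
      · obtain ⟨S', hcut', hcard', hindep'⟩ := core3 hcubic h8 hab hac hbc h1 hmin3 hU hC hD
          hdisj hclC hclD h2
        exact ⟨S', hcut', by rw [hcard', hK], hindep'⟩
      · obtain ⟨S', hcut', hcard', hindep'⟩ := core3 hcubic h8 hab hac hbc h1 hmin3
          (by rw [Set.union_comm]; exact hU) hD hC hdisjD hclD hclC h2
        exact ⟨S', hcut', by rw [hcard', hK], hindep'⟩
    · by_cases h2' : G.Adj a c
      · have hset : (↑({a, c, b} : Finset V) : Set V) = (↑({a, b, c} : Finset V) : Set V) := by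
          ext x; simp; tauto
        have hU' : C ∪ D = (↑({a, c, b} : Finset V) : Set V)ᶜ := by rw [hset]; exact hU
        have hclC' : ∀ z ∈ C, ∀ w ∈ (↑({a, c, b} : Finset V) : Set V)ᶜ, G.Adj z w → w ∈ C := by
          rw [hset]; exact hclC
        have hclD' : ∀ z ∈ D, ∀ w ∈ (↑({a, c, b} : Finset V) : Set V)ᶜ, G.Adj z w → w ∈ D := by
          rw [hset]; exact hclD
        rcases hbig with h2 | h2
        · obtain ⟨S', hcut', hcard', hindep'⟩ := core3 hcubic h8 hac hab hbc.symm h2' hmin3 hU'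
            hC hD hdisj hclC' hclD' h2
          exact ⟨S', hcut', by rw [hcard', hK], hindep'⟩
        · obtain ⟨S', hcut', hcard', hindep'⟩ := core3 hcubic h8 hac hab hbc.symm h2' hmin3
            (by rw [Set.union_comm]; exact hU') hD hC hdisjD hclD' hclC' h2
          exact ⟨S', hcut', by rw [hcard', hK], hindep'⟩
      · by_cases h3 : G.Adj b c
        · have hset : (↑({b, c, a} : Finset V) : Set V) = (↑({a, b, c} : Finset V) : Set V) := by
            ext x; simp; tauto
          have hU' : C ∪ D = (↑({b, c, a} : Finset V) : Set V)ᶜ := by rw [hset]; exact hU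
          have hclC' : ∀ z ∈ C, ∀ w ∈ (↑({b, c, a} : Finset V) : Set V)ᶜ, G.Adj z w → w ∈ C := by
            rw [hset]; exact hclC
          have hclD' : ∀ z ∈ D, ∀ w ∈ (↑({b, c, a} : Finset V) : Set V)ᶜ, G.Adj z w → w ∈ D := by
            rw [hset]; exact hclD
          rcases hbig with h2 | h2
          · obtain ⟨S', hcut', hcard', hindep'⟩ := core3 hcubic h8 hbc hab.symm hac.symm h3
              hmin3 hU' hC hD hdisj hclC' hclD' h2
            exact ⟨S', hcut', by rw [hcard', hK], hindep'⟩
          · obtain ⟨S', hcut', hcard', hindep'⟩ := core3 hcubic h8 hbc hab.symm hac.symm h3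
              hmin3 (by rw [Set.union_comm]; exact hU') hD hC hdisjD hclD' hclC' h2
            exact ⟨S', hcut', by rw [hcard', hK], hindep'⟩
        · exact ⟨{a, b, c}, hS₀cut, by rw [hS₀card, hK], indep3 h1 h2' h3⟩
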